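/- Let I ⊆ R = C[x_1,...,x_N] be a monomial ideal and let I' ⊆ R' = C[x_1,...,x_N,y] be the partial polarization of I with respect to x_i. Then for all positive integers k, Tor_k^{R'}(R'/I', R'/⟨y - x_i⟩) = 0. -/

import Mathlib

open MvPolynomial

/-- Embedding of exponent vectors along `some : Fin N → Option (Fin N)`
(where `none` plays the role of the new variable `y`). -/
noncomputable def embedExp {N : ℕ} (a : Fin N →₀ ℕ) : Option (Fin N) →₀ ℕ :=
  Finsupp.mapDomain some a

/-- The exponent of a partially polarized generator: if `x_i` occurs with exponent `≥ 2`
in `x^a`, replace one factor of `x_i` by the new variable `y` (indexed by `none`). -/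
noncomputable def partialPolarGen {N : ℕ} (i : Fin N) (a : Fin N →₀ ℕ) :
    Option (Fin N) →₀ ℕ :=
  if 2 ≤ a i then embedExp (a - Finsupp.single i 1) + Finsupp.single none 1 else embedExp a

lemma embedExp_none {N : ℕ} (a : Fin N →₀ ℕ) : embedExp a none = 0 := by
  apply Finsupp.mapDomain_notin_range
  simp

lemma embedExp_some {N : ℕ} (a : Fin N →₀ ℕ) (j : Fin N) : embedExp a (some j) = a j :=
  Finsupp.mapDomain_apply (Option.some_injective _) a j

lemma partialPolarGen_none_le {N : ℕ} (i : Fin N) (a : Fin N →₀ ℕ) :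
    partialPolarGen i a none ≤ 1 := by
  unfold partialPolarGen
  split <;> simp [embedExp_none]

lemma le_of_le_add_single {σ : Type*} {q μ : σ →₀ ℕ} {c : σ}
    (h : q ≤ μ + Finsupp.single c 1) (hc : q c ≤ μ c) : q ≤ μ := by
  rw [Finsupp.le_def] at h ⊢
  intro x
  by_cases hx : x = c
  · subst hx; exact hc
  · have := h x
    simpa [Finsupp.add_apply, Finsupp.single_apply, Ne.symm hx, hx] using this

section key
variable {N s : ℕ} (i : Fin N) (g : Fin s → (Fin N →₀ ℕ))

local notation "A" => MvPolynomial (Option (Fin N)) ℂ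

lemma coeff_ymx_mul (p : MvPolynomial (Option (Fin N)) ℂ) (ν : Option (Fin N) →₀ ℕ) :
    coeff ν ((X (none : Option (Fin N)) - X (some i)) * p) =
      (if none ∈ ν.support then coeff (ν - Finsupp.single none 1) p else 0)
        - (if some i ∈ ν.support then coeff (ν - Finsupp.single (some i) 1) p else 0) := by
  rw [sub_mul, coeff_sub, coeff_X_mul', coeff_X_mul']

lemma claim1 (p : MvPolynomial (Option (Fin N)) ℂ)
    (h : ∀ ν ∈ ((X (none : Option (Fin N)) - X (some i)) * p).support,
      ∃ j, partialPolarGen i (g j) ≤ ν) :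
    ∀ (t : ℕ) (μ : Option (Fin N) →₀ ℕ), μ ∈ p.support →
      p.support.sup (fun ν => ν none) ≤ μ none + t →
      ∃ j, partialPolarGen i (g j) ≤ μ + Finsupp.single none 1 := by
  intro t
  induction t with
  | zero =>
    intro μ hμ ht
    set ν := μ + Finsupp.single none 1 with hν
    by_cases hz : coeff ν ((X (none : Option (Fin N)) - X (some i)) * p) = 0
    · exfalso
      rw [coeff_ymx_mul] at hz
      have h1 : none ∈ ν.support := by
        simp [hν, Finsupp.add_apply, Finsupp.single_apply]
      have h2 : ν - Finsupp.single none 1 = μ := by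
        ext a
        rw [Finsupp.tsub_apply]
        simp only [hν, Finsupp.add_apply, Finsupp.single_apply]
        split <;> omega
      rw [if_pos h1, h2] at hz
      have hμp : coeff μ p ≠ 0 := mem_support_iff.mp hμ
      by_cases h3 : some i ∈ ν.support
      · rw [if_pos h3] at hz
        have hc : coeff (ν - Finsupp.single (some i) 1) p ≠ 0 := by
          intro h0; rw [h0] at hz; simp at hz; exact hμp hz
        have hμ' : ν - Finsupp.single (some i) 1 ∈ p.support := mem_support_iff.mpr hc
        have hle : ((ν - Finsupp.single (some i) 1 : Option (Fin N) →₀ ℕ)) none ≤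
            p.support.sup (fun ν => ν none) := Finset.le_sup (f := fun ν => ν none) hμ'
        have : ((ν - Finsupp.single (some i) 1 : Option (Fin N) →₀ ℕ)) none = μ none + 1 := by
          rw [Finsupp.tsub_apply]
          simp [hν, Finsupp.add_apply, Finsupp.single_apply]
        omega
      · rw [if_neg h3] at hz
        simp at hz
        exact hμp hz
    · exact h ν (mem_support_iff.mpr hz)
  | succ t ih =>
    intro μ hμ ht
    set ν := μ + Finsupp.single none 1 with hν
    by_cases hz : coeff ν ((X (none : Option (Fin N)) - X (some i)) * p) = 0
    · rw [coeff_ymx_mul] at hz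
      have h1 : none ∈ ν.support := by
        simp [hν, Finsupp.add_apply, Finsupp.single_apply]
      have h2 : ν - Finsupp.single none 1 = μ := by
        ext a
        rw [Finsupp.tsub_apply]
        simp only [hν, Finsupp.add_apply, Finsupp.single_apply]
        split <;> omega
      rw [if_pos h1, h2] at hz
      have hμp : coeff μ p ≠ 0 := mem_support_iff.mp hμ
      by_cases h3 : some i ∈ ν.support
      swap
      · rw [if_neg h3] at hz; simp at hz; exact absurd hz hμp
      rw [if_pos h3] at hz
      set μ' := ν - Finsupp.single (some i) 1 with hμ'def
      have hc : coeff μ' p ≠ 0 := by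
        intro h0; rw [h0] at hz; simp at hz; exact hμp hz
      have hμ' : μ' ∈ p.support := mem_support_iff.mpr hc
      have hnone : μ' none = μ none + 1 := by
        rw [hμ'def, Finsupp.tsub_apply]
        simp [hν, Finsupp.add_apply, Finsupp.single_apply]
      obtain ⟨j, hj⟩ := ih μ' hμ' (by omega)
      refine ⟨j, le_trans (le_of_le_add_single hj ?_) ?_⟩
      · calc partialPolarGen i (g j) none ≤ 1 := partialPolarGen_none_le i (g j)
          _ ≤ μ' none := by omega
      · exact le_trans tsub_le_self (le_of_eq rfl)
    · exact h ν (mem_support_iff.mpr hz)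


lemma claim2 (p : MvPolynomial (Option (Fin N)) ℂ)
    (h : ∀ ν ∈ ((X (none : Option (Fin N)) - X (some i)) * p).support,
      ∃ j, partialPolarGen i (g j) ≤ ν)
    (μ : Option (Fin N) →₀ ℕ) (hμ : μ ∈ p.support) :
    ∃ j, partialPolarGen i (g j) ≤ μ + Finsupp.single (some i) 1 := by
  set ν := μ + Finsupp.single (some i) 1 with hν
  by_cases hz : coeff ν ((X (none : Option (Fin N)) - X (some i)) * p) = 0
  · rw [coeff_ymx_mul] at hz
    have h2 : ν - Finsupp.single (some i) 1 = μ := by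
      ext a
      rw [Finsupp.tsub_apply]
      simp only [hν, Finsupp.add_apply, Finsupp.single_apply]
      split <;> omega
    rw [if_pos (by simp [hν, Finsupp.add_apply, Finsupp.single_apply] :
      some i ∈ ν.support), h2] at hz
    have hμp : coeff μ p ≠ 0 := mem_support_iff.mp hμ
    by_cases h3 : none ∈ ν.support
    swap
    · rw [if_neg h3] at hz; simp at hz; exact absurd hz hμp
    rw [if_pos h3] at hz
    set μ'' := ν - Finsupp.single none 1 with hμ''def
    have hc : coeff μ'' p ≠ 0 := by
      intro h0; rw [h0] at hz; simp at hz; exact hμp hz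
    have hμ''mem : μ'' ∈ p.support := mem_support_iff.mpr hc
    have hey : Finsupp.single (none : Option (Fin N)) 1 ≤ ν := by
      rw [Finsupp.single_le_iff]
      have := Finsupp.mem_support_iff.mp h3
      omega
    have hback : μ'' + Finsupp.single none 1 = ν := tsub_add_cancel_of_le hey
    obtain ⟨j, hj⟩ := claim1 i g p h (p.support.sup (fun ν => ν none) - μ'' none) μ'' hμ''mem
      (by omega)
    exact ⟨j, by rwa [hback] at hj⟩
  · exact h ν (mem_support_iff.mpr hz)

lemma key (p : MvPolynomial (Option (Fin N)) ℂ)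
    (h : ∀ ν ∈ ((X (none : Option (Fin N)) - X (some i)) * p).support,
      ∃ j, partialPolarGen i (g j) ≤ ν) :
    ∀ μ ∈ p.support, ∃ j, partialPolarGen i (g j) ≤ μ := by
  intro μ hμ
  have hD : μ none ≤ p.support.sup (fun ν => ν none) := Finset.le_sup (f := fun ν => ν none) hμ
  obtain ⟨j, hj⟩ := claim1 i g p h (p.support.sup (fun ν => ν none) - μ none) μ hμ (by omega)
  by_cases hy : 1 ≤ μ none
  · exact ⟨j, le_of_le_add_single hj (le_trans (partialPolarGen_none_le i (g j)) hy)⟩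
  · by_cases h2 : 2 ≤ g j i
    · have hqj : partialPolarGen i (g j) (some i) = g j i - 1 := by
        rw [partialPolarGen, if_pos h2, Finsupp.add_apply, embedExp_some]
        simp [Finsupp.tsub_apply, Finsupp.single_apply]
      have hxi : 1 ≤ μ (some i) := by
        have := (Finsupp.le_def.mp hj) (some i)
        rw [hqj] at this
        simp [Finsupp.add_apply, Finsupp.single_apply] at this
        omega
      obtain ⟨l, hl⟩ := claim2 i g p h μ hμ
      by_cases h2' : 2 ≤ g l i
      · exfalso
        have := (Finsupp.le_def.mp hl) none
        rw [partialPolarGen, if_pos h2'] at this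
        simp [Finsupp.add_apply, Finsupp.single_apply, embedExp_none] at this
        omega
      · refine ⟨l, le_of_le_add_single hl ?_⟩
        rw [partialPolarGen, if_neg h2', embedExp_some]
        omega
    · refine ⟨j, le_of_le_add_single hj ?_⟩
      rw [partialPolarGen, if_neg h2, embedExp_none]
      exact Nat.zero_le _



lemma regular_mod {N s : ℕ} (i : Fin N) (g : Fin s → (Fin N →₀ ℕ))
    (I' : Ideal (MvPolynomial (Option (Fin N)) ℂ))
    (hI' : I' = Ideal.span
      (Set.range fun j => MvPolynomial.monomial (partialPolarGen i (g j)) (1 : ℂ)))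
    (p : MvPolynomial (Option (Fin N)) ℂ)
    (h : (X (none : Option (Fin N)) - X (some i)) * p ∈ I') : p ∈ I' := by
  have hrange : (Set.range fun j => MvPolynomial.monomial (partialPolarGen i (g j)) (1 : ℂ))
      = (fun s => MvPolynomial.monomial s (1 : ℂ)) ''
        (Set.range fun j => partialPolarGen i (g j)) := by
    rw [← Set.range_comp]; rfl
  rw [hI', hrange, mem_ideal_span_monomial_image] at h ⊢
  intro μ hμ
  obtain ⟨j, hj⟩ := key i g p (by
    intro ν hν
    obtain ⟨si, ⟨j, rfl⟩, hsi⟩ := h ν hν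
    exact ⟨j, hsi⟩) μ hμ
  exact ⟨partialPolarGen i (g j), ⟨j, rfl⟩, hj⟩

end key

open CategoryTheory CategoryTheory.Limits

section resolution
variable {A : Type} [CommRing A]

/-- Objects of the two-term complex `0 → A → A → 0`. -/
noncomputable def twoX (A : Type) [CommRing A] : ℕ → ModuleCat A
  | 0 => ModuleCat.of A A
  | 1 => ModuleCat.of A A
  | _ => ModuleCat.of A PUnit

/-- The two-term complex `0 → A -a•-> A → 0`. -/
noncomputable def twoComplex (a : A) : ChainComplex (ModuleCat A) ℕ :=
  ChainComplex.of (twoX A)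
    (fun n => match n with
      | 0 => a • 𝟙 (ModuleCat.of A A)
      | _ + 1 => 0)
    (fun n => match n with
      | 0 => zero_comp
      | _ + 1 => zero_comp)

lemma twoComplex_d10 (a : A) : (twoComplex a).d 1 0 = a • 𝟙 (ModuleCat.of A A) :=
  by unfold twoComplex; simp [ChainComplex.of.d]; exact Category.id_comp _

lemma twoComplex_d21 (a : A) : (twoComplex a).d 2 1 = 0 :=
  by unfold twoComplex; simp [ChainComplex.of.d]

instance twoComplex_projective (a : A) (n : ℕ) : Projective ((twoComplex a).X n) := by
  have b1 : Projective (ModuleCat.of A A) :=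
    ModuleCat.projective_of_free (Module.Basis.singleton PUnit.{1} A)
  have b2 : Projective (ModuleCat.of A PUnit) :=
    ModuleCat.projective_of_free (Module.Basis.empty (ι := PEmpty.{1}) PUnit.{1})
  match n with
  | 0 => exact b1
  | 1 => exact b1
  | n + 2 => exact b2

/-- The quotient map as the augmentation. -/
noncomputable def twoPi (a : A) :
    twoComplex a ⟶ (ChainComplex.single₀ (ModuleCat A)).obj
      (ModuleCat.of A (A ⧸ Ideal.span {a})) :=
  (ChainComplex.toSingle₀Equiv _ _).symm
    ⟨ModuleCat.ofHom (Submodule.mkQ (Ideal.span {a})),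
      by
        have h0 : (a • 𝟙 (ModuleCat.of A A)) ≫ (ModuleCat.ofHom (Submodule.mkQ (Ideal.span {a})) : ModuleCat.of A A ⟶ ModuleCat.of A (A ⧸ Ideal.span {a})) = 0 := by
          apply ModuleCat.hom_ext; apply LinearMap.ext; intro (x : A)
          change Submodule.mkQ _ (a • x) = 0
          rw [Submodule.mkQ_apply, Submodule.Quotient.mk_eq_zero]
          exact Ideal.mem_span_singleton.mpr ⟨x, rfl⟩
        rw [twoComplex_d10]
        exact h0⟩

lemma twoPi_f_zero (a : A) :
    (twoPi a).f 0 = (ModuleCat.ofHom (Submodule.mkQ (Ideal.span {a})) :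
      ModuleCat.of A A ⟶ ModuleCat.of A (A ⧸ Ideal.span {a})) := by
  apply ChainComplex.toSingle₀Equiv_symm_apply_f_zero


lemma twoComplex_exactAt_succ (a : A) (ha : Function.Injective fun x : A => a * x) (n : ℕ) :
    (twoComplex a).ExactAt (n + 1) := by
  rw [HomologicalComplex.exactAt_iff' _ (n + 2) (n + 1) n (by simp) (by simp)]
  match n with
  | 0 =>
    rw [ShortComplex.exact_iff_mono]
    swap
    · exact twoComplex_d21 a
    · change Mono ((twoComplex a).d 1 0)
      rw [twoComplex_d10]
      change Mono (a • 𝟙 (ModuleCat.of A A) : ModuleCat.of A A ⟶ ModuleCat.of A A)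
      rw [ModuleCat.mono_iff_injective]
      intro x y hxy
      exact ha (by simpa [smul_eq_mul] using hxy)
  | n + 1 =>
    apply ShortComplex.exact_of_isZero_X₂
    exact ModuleCat.isZero_of_subsingleton (ModuleCat.of A PUnit)

/-- The two-term complex as a projective resolution of `A ⧸ (a)`. -/
noncomputable def twoRes (a : A) (ha : Function.Injective fun x : A => a * x) :
    ProjectiveResolution (ModuleCat.of A (A ⧸ Ideal.span {a})) where
  complex := twoComplex a
  π := twoPi a
  quasiIso := ⟨fun n => by
    cases n with
    | zero =>
      rw [ChainComplex.quasiIsoAt₀_iff, ShortComplex.quasiIso_iff_of_zeros']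
      · refine ⟨?_, ?_⟩
        · rw [ShortComplex.moduleCat_exact_iff]
          intro (x : A) hx
          have hx' : Submodule.mkQ (Ideal.span {a}) x = 0 := hx
          rw [Submodule.mkQ_apply, Submodule.Quotient.mk_eq_zero] at hx'
          obtain ⟨y, hy⟩ := Ideal.mem_span_singleton.mp hx'
          refine ⟨y, ?_⟩
          show ((twoComplex a).d 1 0) y = x
          rw [twoComplex_d10]
          change a • y = x
          simpa [smul_eq_mul] using hy.symm
        · change Epi ((twoPi a).f 0)
          rw [twoPi_f_zero]
          change Epi (ModuleCat.ofHom (Submodule.mkQ (Ideal.span {a})) : ModuleCat.of A A ⟶ ModuleCat.of A (A ⧸ Ideal.span {a}))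
          rw [ModuleCat.epi_iff_surjective]
          exact Submodule.mkQ_surjective _
      all_goals rfl
    | succ n =>
      rw [quasiIsoAt_iff_exactAt']
      · exact twoComplex_exactAt_succ a ha n
      · apply ChainComplex.exactAt_succ_single_obj⟩


open MonoidalCategory in
lemma isZero_tor_of_regular (a : A)
    (ha : Function.Injective fun x : A => a * x)
    (M : ModuleCat A) (hreg : Function.Injective fun m : M => a • m)
    (k : ℕ) (hk : 0 < k) :
    IsZero (((Tor (ModuleCat A) k).obj M).obj (ModuleCat.of A (A ⧸ Ideal.span {a}))) := by
  let F := (tensoringLeft (ModuleCat A)).obj M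
  haveI : F.Linear A := (inferInstance : (tensorLeft M).Linear A)
  let P := twoRes a ha
  refine IsZero.of_iso ?_ (P.isoLeftDerivedObj F k)
  obtain ⟨j, rfl⟩ : ∃ j, k = j + 1 := ⟨k - 1, by omega⟩
  set K := (F.mapHomologicalComplex (ComplexShape.down ℕ)).obj P.complex with hK
  show IsZero (K.homology (j + 1))
  rw [← HomologicalComplex.exactAt_iff_isZero_homology]
  rw [HomologicalComplex.exactAt_iff' K (j + 2) (j + 1) j (by simp) (by simp)]
  match j with
  | 0 =>
    have hf : (K.sc' 2 1 0).f = 0 := by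
      show F.map ((twoComplex a).d 2 1) = 0
      rw [twoComplex_d21, Functor.map_zero]
    rw [ShortComplex.exact_iff_mono _ hf]
    show Mono (F.map ((twoComplex a).d 1 0))
    rw [twoComplex_d10]
    change Mono (F.map (a • 𝟙 (ModuleCat.of A A) : ModuleCat.of A A ⟶ ModuleCat.of A A))
    rw [F.map_smul]
    have hid := F.map_id (ModuleCat.of A A)
    rw [hid]
    rw [ModuleCat.mono_iff_injective]
    intro u v huv
    let e : ↑(F.obj (ModuleCat.of A A)) ≃ₗ[A] ↑M := TensorProduct.rid A M
    have huv' : a • u = a • v := by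
      exact huv
    have : a • e u = a • e v := by rw [← map_smul, ← map_smul, huv']
    exact e.injective (hreg this)
  | j + 1 =>
    apply ShortComplex.exact_of_isZero_X₂
    show IsZero (F.obj ((twoComplex a).X (j + 3)))
    exact Functor.map_isZero F (ModuleCat.isZero_of_subsingleton (ModuleCat.of A PUnit))

end resolution

open CategoryTheory

/-- `Tor_k^{R'}(R'/I', R'/⟨y - x_i⟩) = 0` for all positive `k`, where `I'`
is the partial polarization of the monomial ideal `I` with respect to `x_i`. -/
theorem tor_partial_polarization_vanishes {N s : ℕ} (i : Fin N)
    (g : Fin s → (Fin N →₀ ℕ))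
    (I : Ideal (MvPolynomial (Fin N) ℂ))
    (hgen : I = Ideal.span (Set.range fun j => MvPolynomial.monomial (g j) (1 : ℂ)))
    (hmin : ∀ j k : Fin s, g j ≤ g k → j = k)
    (hx : ∃ j, 2 ≤ g j i)
    (I' : Ideal (MvPolynomial (Option (Fin N)) ℂ))
    (hI' : I' = Ideal.span
      (Set.range fun j => MvPolynomial.monomial (partialPolarGen i (g j)) (1 : ℂ)))
    (k : ℕ) (hk : 0 < k) :
    Limits.IsZero
      (((Tor (ModuleCat (MvPolynomial (Option (Fin N)) ℂ)) k).obj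
          (ModuleCat.of (MvPolynomial (Option (Fin N)) ℂ)
            (MvPolynomial (Option (Fin N)) ℂ ⧸ I'))).obj
        (ModuleCat.of (MvPolynomial (Option (Fin N)) ℂ)
          (MvPolynomial (Option (Fin N)) ℂ ⧸
            (Ideal.span {MvPolynomial.X none - MvPolynomial.X (some i)} :
              Ideal (MvPolynomial (Option (Fin N)) ℂ))))) := by
  set Rp := MvPolynomial (Option (Fin N)) ℂ with hRp
  set a : Rp := MvPolynomial.X none - MvPolynomial.X (some i) with haa
  have haneq : a ≠ 0 := by
    rw [haa, sub_ne_zero]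
    intro h
    exact absurd (MvPolynomial.X_injective (σ := Option (Fin N)) (R := ℂ) h) (by simp)
  have ha : Function.Injective fun x : Rp => a * x := fun u v h =>
    mul_left_cancel₀ haneq h
  have hreg : Function.Injective fun m : Rp ⧸ I' => a • m := by
    intro u v huv
    obtain ⟨pu, rfl⟩ := Submodule.Quotient.mk_surjective I' u
    obtain ⟨pv, rfl⟩ := Submodule.Quotient.mk_surjective I' v
    simp only [← Submodule.Quotient.mk_smul] at huv
    rw [Submodule.Quotient.eq] at huv ⊢
    have : a * (pu - pv) ∈ I' := by
      rw [mul_sub]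
      simpa [smul_eq_mul] using huv
    exact regular_mod i g I' hI' _ this
  exact isZero_tor_of_regular a ha
    (ModuleCat.of Rp (Rp ⧸ I')) hreg k hk
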